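/- Let the profile graph of an approval profile be K_{d,d}-free, where d ≥ 1 and |C| = n. Then the number of distinct approval sets occurring among the voters, |{A_v : v ∈ V}|, is at most (d − 1)·C(n, d) + Σ_{i=0}^{d−1} C(n, i), where C(n, i) denotes the binomial coefficient. -/
import Mathlib


open Finset

/-- The profile graph is `K_{d,d}`-free: there do not exist `d` voters and `d` candidates
such that each of the `d` voters approves all `d` candidates. -/
def KddFree {C V : Type*} (A : V → Finset C) (d : ℕ) : Prop :=
  ¬ ∃ (D : Finset V) (E : Finset C), D.card = d ∧ E.card = d ∧ ∀ v ∈ D, E ⊆ A v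

/-- In a `K_{d,d}`-free profile with `n` candidates, the number of distinct approval sets
among the voters is at most `(d-1)·C(n,d) + ∑_{i=0}^{d-1} C(n,i)`. -/
theorem stmt_10 {C V : Type*} [Fintype C] [Fintype V] [DecidableEq C]
    (A : V → Finset C) (d : ℕ) (hd : 1 ≤ d) (hfree : KddFree A d) :
    (Finset.univ.image A).card ≤
      (d - 1) * (Fintype.card C).choose d +
        ∑ i ∈ Finset.range d, (Fintype.card C).choose i := by
  classical
  set F : Finset (Finset C) := Finset.univ.image A with hF
  -- choice of a d-subset of each large set
  let f : Finset C → Finset C := fun S =>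
    if h : d ≤ S.card then (Finset.exists_subset_card_eq h).choose else ∅
  have hf : ∀ S : Finset C, d ≤ S.card → f S ⊆ S ∧ (f S).card = d := by
    intro S h
    have := (Finset.exists_subset_card_eq h).choose_spec
    simpa [f, h] using this
  set Fbig := F.filter (fun S => d ≤ S.card) with hFbig
  set Fsmall := F.filter (fun S => ¬ d ≤ S.card) with hFsmall
  have hsplit : Fbig.card + Fsmall.card = F.card := by
    rw [hFbig, hFsmall]
    exact Finset.card_filter_add_card_filter_not _
  -- small part
  have hsmall : Fsmall.card ≤ ∑ i ∈ Finset.range d, (Fintype.card C).choose i := by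
    have hsub : Fsmall ⊆ (Finset.range d).biUnion
        (fun i => Finset.powersetCard i (Finset.univ : Finset C)) := by
      intro S hS
      rw [hFsmall, Finset.mem_filter] at hS
      rw [Finset.mem_biUnion]
      refine ⟨S.card, Finset.mem_range.2 (lt_of_not_ge hS.2), ?_⟩
      rw [Finset.mem_powersetCard]
      exact ⟨Finset.subset_univ S, rfl⟩
    calc Fsmall.card ≤ _ := Finset.card_le_card hsub
      _ ≤ ∑ i ∈ Finset.range d, (Finset.powersetCard i (Finset.univ : Finset C)).card :=
        Finset.card_biUnion_le
      _ = ∑ i ∈ Finset.range d, (Fintype.card C).choose i := by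
        simp [Finset.card_powersetCard]
  -- big part
  have hfmem : ∀ S ∈ Fbig, f S ∈ Finset.powersetCard d (Finset.univ : Finset C) := by
    intro S hS
    rw [hFbig, Finset.mem_filter] at hS
    rw [Finset.mem_powersetCard]
    exact ⟨Finset.subset_univ _, (hf S hS.2).2⟩
  have hbigsum : Fbig.card =
      ∑ T ∈ Finset.powersetCard d (Finset.univ : Finset C),
        (Fbig.filter (fun S => f S = T)).card :=
    Finset.card_eq_sum_card_fiberwise hfmem
  have hfiber : ∀ T ∈ Finset.powersetCard d (Finset.univ : Finset C),
      (Fbig.filter (fun S => f S = T)).card ≤ d - 1 := by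
    intro T hT
    by_contra hcon
    push_neg at hcon
    have hdle : d ≤ (Fbig.filter (fun S => f S = T)).card := by omega
    obtain ⟨W, hWsub, hWcard⟩ := Finset.exists_subset_card_eq hdle
    -- every S ∈ W contains T and equals some A v
    have hWprop : ∀ S ∈ W, T ⊆ S ∧ ∃ v, A v = S := by
      intro S hS
      have hS' := hWsub hS
      rw [Finset.mem_filter] at hS'
      obtain ⟨hS1, hfST⟩ := hS'
      rw [hFbig, Finset.mem_filter] at hS1
      obtain ⟨hS2, hSd⟩ := hS1
      rw [hF, Finset.mem_image] at hS2
      obtain ⟨v, _, hv⟩ := hS2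
      exact ⟨hfST ▸ (hf S hSd).1, v, hv⟩
    have hWne : W.Nonempty := Finset.card_pos.1 (by omega)
    obtain ⟨S₀, hS₀⟩ := hWne
    obtain ⟨_, v₀, _⟩ := hWprop S₀ hS₀
    haveI : Nonempty V := ⟨v₀⟩
    let h : Finset C → V := fun S => Classical.epsilon (fun v => A v = S)
    have hh : ∀ S ∈ W, A (h S) = S := by
      intro S hS
      exact Classical.epsilon_spec (hWprop S hS).2
    refine hfree ⟨W.image h, T, ?_, ?_, ?_⟩
    · rw [Finset.card_image_of_injOn, hWcard]
      intro a ha b hb hab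
      rw [← hh a ha, ← hh b hb, hab]
    · exact (Finset.mem_powersetCard.1 hT).2
    · intro v hv
      rw [Finset.mem_image] at hv
      obtain ⟨S, hS, rfl⟩ := hv
      rw [hh S hS]
      exact (hWprop S hS).1
  have hbig : Fbig.card ≤ (d - 1) * (Fintype.card C).choose d := by
    rw [hbigsum]
    calc ∑ T ∈ Finset.powersetCard d (Finset.univ : Finset C),
          (Fbig.filter (fun S => f S = T)).card
        ≤ ∑ _T ∈ Finset.powersetCard d (Finset.univ : Finset C), (d - 1) :=
          Finset.sum_le_sum hfiber
      _ = (Finset.powersetCard d (Finset.univ : Finset C)).card * (d - 1) := by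
          rw [Finset.sum_const, smul_eq_mul]
      _ = (d - 1) * (Fintype.card C).choose d := by
          rw [Finset.card_powersetCard, Finset.card_univ, mul_comm]
  omega
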